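/- Let A be an n×n matrix over ℕ. Every group homomorphism θ : G_A → G_B that commutes with the shift automorphisms (θ ∘ θ_A = θ_B ∘ θ) and is order-preserving arises, up to a power of the shift, from a nonnegative integer matrix: there exist a nonnegative n×p integer matrix R and r ∈ ℕ with AR = RB and θ([v,k]) = θ_B^{-r}([Rᵗ v, k]) for all [v,k] ∈ G_A. -/

import Mathlib

/-- The relation defining the dimension group `G_A = (ℤ^n × ℕ)/∼`. -/
def DimRel {n : ℕ} (A : Matrix (Fin n) (Fin n) ℤ) :
    ((Fin n → ℤ) × ℕ) → ((Fin n → ℤ) × ℕ) → Prop :=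
  fun p q => ∃ m : ℕ, p.2 ≤ m ∧ q.2 ≤ m ∧
    (A.transpose ^ (m - p.2)).mulVec p.1 = (A.transpose ^ (m - q.2)).mulVec q.1

/-- Addition of representatives: `[v,k] + [w,l] = [(Aᵗ)^l v + (Aᵗ)^k w, k + l]`. -/
def DimAdd {n : ℕ} (A : Matrix (Fin n) (Fin n) ℤ) :
    ((Fin n → ℤ) × ℕ) → ((Fin n → ℤ) × ℕ) → ((Fin n → ℤ) × ℕ) :=
  fun p q => ((A.transpose ^ q.2).mulVec p.1 + (A.transpose ^ p.2).mulVec q.1, p.2 + q.2)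

section Aux

variable {q : ℕ}

private lemma mulVec_pow_add (M : Matrix (Fin q) (Fin q) ℤ) (a b : ℕ) (v : Fin q → ℤ) :
    (M ^ a).mulVec ((M ^ b).mulVec v) = (M ^ (a + b)).mulVec v := by
  rw [Matrix.mulVec_mulVec, ← pow_add]

private lemma dimRel_mono (M : Matrix (Fin q) (Fin q) ℤ) {x y : (Fin q → ℤ) × ℕ}
    {m m' : ℕ} (h1 : x.2 ≤ m) (h2 : y.2 ≤ m) (hm : m ≤ m')
    (h : (M.transpose ^ (m - x.2)).mulVec x.1 = (M.transpose ^ (m - y.2)).mulVec y.1) :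
    (M.transpose ^ (m' - x.2)).mulVec x.1 = (M.transpose ^ (m' - y.2)).mulVec y.1 := by
  have e1 : m' - x.2 = (m' - m) + (m - x.2) := by omega
  have e2 : m' - y.2 = (m' - m) + (m - y.2) := by omega
  rw [e1, e2, ← mulVec_pow_add, ← mulVec_pow_add, h]

private lemma dimRel_refl (M : Matrix (Fin q) (Fin q) ℤ) (x : (Fin q → ℤ) × ℕ) :
    DimRel M x x := ⟨x.2, le_rfl, le_rfl, rfl⟩

private lemma dimRel_symm {M : Matrix (Fin q) (Fin q) ℤ} {x y : (Fin q → ℤ) × ℕ}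
    (h : DimRel M x y) : DimRel M y x := by
  obtain ⟨m, h1, h2, e⟩ := h
  exact ⟨m, h2, h1, e.symm⟩

private lemma dimRel_trans {M : Matrix (Fin q) (Fin q) ℤ} {x y z : (Fin q → ℤ) × ℕ}
    (h : DimRel M x y) (h' : DimRel M y z) : DimRel M x z := by
  obtain ⟨m1, h1, h2, e1⟩ := h
  obtain ⟨m2, h3, h4, e2⟩ := h'
  refine ⟨max m1 m2, le_trans h1 (le_max_left _ _), le_trans h4 (le_max_right _ _), ?_⟩
  have E1 := dimRel_mono M h1 h2 (le_max_left m1 m2) e1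
  have E2 := dimRel_mono M h3 h4 (le_max_right m1 m2) e2
  rw [E1, E2]

private lemma dimRel_shift (M : Matrix (Fin q) (Fin q) ℤ) (v : Fin q → ℤ) (k : ℕ) :
    DimRel M (M.transpose.mulVec v, k + 1) (v, k) := by
  refine ⟨k + 1, le_rfl, by omega, ?_⟩
  have h0 : k + 1 - (k + 1) = 0 := by omega
  have h1 : k + 1 - k = 1 := by omega
  rw [h0, h1, pow_zero, pow_one, Matrix.one_mulVec]

private lemma dimRel_shift_pow (M : Matrix (Fin q) (Fin q) ℤ) (v : Fin q → ℤ) (k s : ℕ) :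
    DimRel M ((M.transpose ^ s).mulVec v, k + s) (v, k) := by
  induction s with
  | zero => simpa using dimRel_refl M (v, k)
  | succ s ih =>
    have h1 : DimRel M ((M.transpose ^ (s + 1)).mulVec v, (k + s) + 1)
        ((M.transpose ^ s).mulVec v, k + s) := by
      have h := dimRel_shift M ((M.transpose ^ s).mulVec v) (k + s)
      rw [Matrix.mulVec_mulVec, ← pow_succ'] at h
      exact h
    have h2 := dimRel_trans h1 ih
    have e : k + (s + 1) = (k + s) + 1 := by omega
    rw [e]
    exact h2

private lemma dimRel_unshift {M : Matrix (Fin q) (Fin q) ℤ} {w u : Fin q → ℤ} {l t : ℕ}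
    (h : DimRel M (M.transpose.mulVec w, l) (u, t)) : DimRel M (w, l) (u, t + 1) := by
  obtain ⟨m, hl, ht, e⟩ := h
  refine ⟨m + 1, by omega, by omega, ?_⟩
  have e1 : m + 1 - l = (m - l) + 1 := by omega
  have e2 : m + 1 - (t + 1) = m - t := by omega
  rw [e1, e2, pow_succ, ← Matrix.mulVec_mulVec]
  exact e

private lemma dimRel_map {M : Matrix (Fin q) (Fin q) ℤ} {x y : (Fin q → ℤ) × ℕ}
    (h : DimRel M x y) :
    DimRel M (M.transpose.mulVec x.1, x.2) (M.transpose.mulVec y.1, y.2) := by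
  obtain ⟨m, h1, h2, e⟩ := h
  refine ⟨m, h1, h2, ?_⟩
  rw [Matrix.mulVec_mulVec, Matrix.mulVec_mulVec, ← pow_succ, ← pow_succ,
    pow_succ', pow_succ', ← Matrix.mulVec_mulVec, ← Matrix.mulVec_mulVec, e]

private lemma dimRel_add_compat {M : Matrix (Fin q) (Fin q) ℤ} {x x' y y' : (Fin q → ℤ) × ℕ}
    (hx : DimRel M x x') (hy : DimRel M y y') :
    DimRel M (DimAdd M x y) (DimAdd M x' y') := by
  obtain ⟨m1, a1, a2, e1⟩ := hx
  obtain ⟨m2, b1, b2, e2⟩ := hy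
  have hx2 : x.2 ≤ max m1 m2 := le_trans a1 (le_max_left _ _)
  have hx2' : x'.2 ≤ max m1 m2 := le_trans a2 (le_max_left _ _)
  have hy2 : y.2 ≤ max m1 m2 := le_trans b1 (le_max_right _ _)
  have hy2' : y'.2 ≤ max m1 m2 := le_trans b2 (le_max_right _ _)
  set m := max m1 m2 with hm
  have E1 := dimRel_mono M a1 a2 (le_max_left m1 m2) e1
  have E2 := dimRel_mono M b1 b2 (le_max_right m1 m2) e2
  simp only [DimRel, DimAdd]
  refine ⟨m + m, by omega, by omega, ?_⟩
  rw [Matrix.mulVec_add, Matrix.mulVec_add, mulVec_pow_add, mulVec_pow_add,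
    mulVec_pow_add, mulVec_pow_add]
  have c1 : m + m - (x.2 + y.2) + y.2 = m + (m - x.2) := by omega
  have c2 : m + m - (x.2 + y.2) + x.2 = m + (m - y.2) := by omega
  have c3 : m + m - (x'.2 + y'.2) + y'.2 = m + (m - x'.2) := by omega
  have c4 : m + m - (x'.2 + y'.2) + x'.2 = m + (m - y'.2) := by omega
  rw [c1, c2, c3, c4, ← mulVec_pow_add, ← mulVec_pow_add, ← mulVec_pow_add,
    ← mulVec_pow_add, E1, E2]

private lemma dimRel_cancel {M : Matrix (Fin q) (Fin q) ℤ} {x y z : (Fin q → ℤ) × ℕ}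
    (h : DimRel M (DimAdd M x z) (DimAdd M y z)) : DimRel M x y := by
  simp only [DimRel, DimAdd] at h
  obtain ⟨m, h1, h2, e⟩ := h
  rw [Matrix.mulVec_add, Matrix.mulVec_add, mulVec_pow_add, mulVec_pow_add,
    mulVec_pow_add, mulVec_pow_add] at e
  have c1 : m - (x.2 + z.2) + z.2 = m - x.2 := by omega
  have c2 : m - (x.2 + z.2) + x.2 = m - z.2 := by omega
  have c3 : m - (y.2 + z.2) + z.2 = m - y.2 := by omega
  have c4 : m - (y.2 + z.2) + y.2 = m - z.2 := by omega
  rw [c1, c2, c3, c4] at e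
  exact ⟨m, by omega, by omega, add_right_cancel e⟩

private lemma pow_entry_nonneg {M : Matrix (Fin q) (Fin q) ℤ} (hM : ∀ i j, 0 ≤ M i j)
    (s : ℕ) : ∀ i j, 0 ≤ (M ^ s) i j := by
  induction s with
  | zero =>
    intro i j
    rw [pow_zero]
    by_cases h : i = j <;> simp [Matrix.one_apply, h]
  | succ s ih =>
    intro i j
    rw [pow_succ, Matrix.mul_apply]
    exact Finset.sum_nonneg fun k _ => mul_nonneg (ih i k) (hM k j)

private lemma mulVec_nonneg {q' : ℕ} {M : Matrix (Fin q) (Fin q') ℤ}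
    (hM : ∀ i j, 0 ≤ M i j) {v : Fin q' → ℤ} (hv : ∀ i, 0 ≤ v i) :
    ∀ i, 0 ≤ M.mulVec v i := by
  intro i
  simp only [Matrix.mulVec, dotProduct]
  exact Finset.sum_nonneg fun k _ => mul_nonneg (hM i k) (hv k)

end Aux

/-- Every order-preserving group homomorphism `θ : G_A → G_B` commuting with the shift
automorphisms arises, up to a power of the shift, from a nonnegative integer matrix `R`
with `AR = RB`: there exist such an `R` and `r ∈ ℕ` with
`θ([v,k]) = θ_B^{-r}([Rᵗ v, k]) = [Rᵗ v, k + r]` for all `[v,k] ∈ G_A`.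
Here `θ` is described on representatives by a map respecting `∼`. -/
theorem dimGroup_hom_lifts_to_matrix {n p : ℕ}
    (A : Matrix (Fin n) (Fin n) ℤ) (B : Matrix (Fin p) (Fin p) ℤ)
    (hApos : ∀ i j, 0 ≤ A i j) (hBpos : ∀ i j, 0 ≤ B i j)
    (θ : ((Fin n → ℤ) × ℕ) → ((Fin p → ℤ) × ℕ))
    -- θ is well defined on classes
    (hwd : ∀ x y, DimRel A x y → DimRel B (θ x) (θ y))
    -- θ is a group homomorphism
    (hadd : ∀ x y, DimRel B (θ (DimAdd A x y)) (DimAdd B (θ x) (θ y)))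
    -- θ commutes with the shift automorphisms: θ ∘ θ_A = θ_B ∘ θ
    (hshift : ∀ x : (Fin n → ℤ) × ℕ,
      DimRel B (θ (A.transpose.mulVec x.1, x.2)) (B.transpose.mulVec (θ x).1, (θ x).2))
    -- θ is order-preserving: the positive cone maps into the positive cone
    (hord : ∀ x : (Fin n → ℤ) × ℕ, (∀ i, 0 ≤ x.1 i) →
      ∃ (w : Fin p → ℤ) (l : ℕ), DimRel B (θ x) (w, l) ∧ ∀ i, 0 ≤ w i) :
    ∃ (R : Matrix (Fin n) (Fin p) ℤ) (r : ℕ),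
      (∀ i j, 0 ≤ R i j) ∧ A * R = R * B ∧
      ∀ (v : Fin n → ℤ) (k : ℕ),
        DimRel B (θ (v, k)) (R.transpose.mulVec v, k + r) := by
  classical
  have hBtpos : ∀ i j, (0:ℤ) ≤ B.transpose i j := by
    intro i j
    rw [Matrix.transpose_apply]
    exact hBpos j i
  have hsingle_nonneg : ∀ i : Fin n, ∀ j, (0:ℤ) ≤ (Pi.single i 1 : Fin n → ℤ) j := by
    intro i j
    by_cases h : j = i <;> simp [Pi.single_apply, h]
  choose w l hrel hpos using fun i : Fin n => hord (Pi.single i 1, 0) (hsingle_nonneg i)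
  set r0 := Finset.univ.sup l with hr0def
  have hle : ∀ i, l i ≤ r0 := fun i => Finset.le_sup (Finset.mem_univ i)
  set R0 : Matrix (Fin n) (Fin p) ℤ :=
    Matrix.of (fun i j => (B.transpose ^ (r0 - l i)).mulVec (w i) j) with hR0def
  have hR0pos : ∀ i j, 0 ≤ R0 i j := by
    intro i j
    rw [hR0def]
    exact mulVec_nonneg (pow_entry_nonneg hBtpos _) (hpos i) j
  have hRsingle : ∀ i : Fin n,
      R0.transpose.mulVec (Pi.single i 1) = (B.transpose ^ (r0 - l i)).mulVec (w i) := by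
    intro i
    funext j
    simp [Matrix.mulVec_single, hR0def]
  -- θ of basis vectors
  have Psingle : ∀ i : Fin n,
      DimRel B (θ (Pi.single i 1, 0)) (R0.transpose.mulVec (Pi.single i 1), r0) := by
    intro i
    refine dimRel_trans (hrel i) ?_
    rw [hRsingle i]
    have h := dimRel_shift_pow B (w i) (l i) (r0 - l i)
    have e : l i + (r0 - l i) = r0 := by have := hle i; omega
    rw [e] at h
    exact dimRel_symm h
  -- θ(0,0) ~ (0,0)
  have theta0 : DimRel B (θ (0, 0)) ((0 : Fin p → ℤ), 0) := by
    have h := hadd ((0 : Fin n → ℤ), 0) (0, 0)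
    have e : DimAdd A ((0 : Fin n → ℤ), 0) (0, 0) = (0, 0) := by
      simp [DimAdd, Matrix.mulVec_zero]
    rw [e] at h
    have e2 : DimAdd B ((0 : Fin p → ℤ), 0) (θ (0, 0)) = θ (0, 0) := by
      simp [DimAdd, Matrix.mulVec_zero, Matrix.one_mulVec]
    exact dimRel_cancel (z := θ (0, 0)) (by rw [e2]; exact dimRel_symm h)
  have Pzero : DimRel B (θ ((0 : Fin n → ℤ), 0)) (R0.transpose.mulVec 0, r0) := by
    have h : DimRel B ((0 : Fin p → ℤ), 0) ((0 : Fin p → ℤ), r0) :=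
      ⟨r0, by omega, le_rfl, by simp [Matrix.mulVec_zero]⟩
    simpa [Matrix.mulVec_zero] using dimRel_trans theta0 h
  have Padd : ∀ v w' : Fin n → ℤ,
      DimRel B (θ (v, 0)) (R0.transpose.mulVec v, r0) →
      DimRel B (θ (w', 0)) (R0.transpose.mulVec w', r0) →
      DimRel B (θ (v + w', 0)) (R0.transpose.mulVec (v + w'), r0) := by
    intro v w' hv hw
    have e : DimAdd A (v, 0) (w', 0) = (v + w', 0) := by
      simp [DimAdd, Matrix.one_mulVec]
    have h1 := hadd (v, 0) (w', 0)
    rw [e] at h1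
    have h2 := dimRel_add_compat hv hw
    have e2 : DimAdd B (R0.transpose.mulVec v, r0) (R0.transpose.mulVec w', r0)
        = ((B.transpose ^ r0).mulVec (R0.transpose.mulVec (v + w')), r0 + r0) := by
      simp [DimAdd, Matrix.mulVec_add]
    rw [e2] at h2
    have h3 := dimRel_shift_pow B (R0.transpose.mulVec (v + w')) r0 r0
    exact dimRel_trans (dimRel_trans h1 h2) h3
  have Pneg : ∀ v : Fin n → ℤ,
      DimRel B (θ (v, 0)) (R0.transpose.mulVec v, r0) →
      DimRel B (θ (-v, 0)) (R0.transpose.mulVec (-v), r0) := by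
    intro v hv
    have e : DimAdd A (-v, 0) (v, 0) = ((0 : Fin n → ℤ), 0) := by
      simp [DimAdd, Matrix.one_mulVec]
    have h1 := hadd (-v, 0) (v, 0)
    rw [e] at h1
    have hL : DimRel B (DimAdd B (θ (-v, 0)) (θ (v, 0))) ((0 : Fin p → ℤ), 0) :=
      dimRel_trans (dimRel_symm h1) theta0
    have h2 := dimRel_add_compat (dimRel_refl B (R0.transpose.mulVec (-v), r0)) hv
    have e2 : DimAdd B (R0.transpose.mulVec (-v), r0) (R0.transpose.mulVec v, r0)
        = ((0 : Fin p → ℤ), r0 + r0) := by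
      simp [DimAdd, Matrix.mulVec_neg]
    rw [e2] at h2
    have hzz : DimRel B ((0 : Fin p → ℤ), r0 + r0) ((0 : Fin p → ℤ), 0) :=
      ⟨r0 + r0, le_rfl, by omega, by simp [Matrix.mulVec_zero]⟩
    have hR : DimRel B (DimAdd B (R0.transpose.mulVec (-v), r0) (θ (v, 0)))
        ((0 : Fin p → ℤ), 0) := dimRel_trans h2 hzz
    exact dimRel_cancel (dimRel_trans hL (dimRel_symm hR))
  have Psmul : ∀ v : Fin n → ℤ,
      DimRel B (θ (v, 0)) (R0.transpose.mulVec v, r0) →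
      ∀ c : ℤ, DimRel B (θ (c • v, 0)) (R0.transpose.mulVec (c • v), r0) := by
    intro v hv c
    induction c using Int.induction_on with
    | zero => simpa using Pzero
    | succ k ih =>
      have h := Padd ((k : ℤ) • v) v ih hv
      have e : ((k : ℤ) + 1) • v = (k : ℤ) • v + v := by rw [add_smul, one_smul]
      rw [e]
      exact h
    | pred k ih =>
      have h := Padd ((-(k : ℤ)) • v) (-v) ih (Pneg v hv)
      have e : (-(k : ℤ) - 1) • v = (-(k : ℤ)) • v + -v := by
        rw [sub_smul, one_smul, sub_eq_add_neg]
      rw [e]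
      exact h
  have Pall : ∀ v : Fin n → ℤ, DimRel B (θ (v, 0)) (R0.transpose.mulVec v, r0) := by
    intro v
    have hv : v = ∑ i : Fin n, (v i) • Pi.single i (1 : ℤ) := by
      funext j
      simp [Finset.sum_apply, Pi.single_apply]
    rw [hv]
    refine Finset.sum_induction _
      (fun u => DimRel B (θ (u, 0)) (R0.transpose.mulVec u, r0))
      (fun a b ha hb => Padd a b ha hb) Pzero ?_
    intro i _
    exact Psmul _ (Psingle i) (v i)
  -- the main description at all levels k
  have hmain : ∀ (v : Fin n → ℤ) (k : ℕ),
      DimRel B (θ (v, k)) (R0.transpose.mulVec v, k + r0) := by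
    intro v k
    induction k with
    | zero => simpa using Pall v
    | succ k ih =>
      have hA := dimRel_shift A v k
      have h1 : DimRel B (θ (A.transpose.mulVec v, k + 1)) (R0.transpose.mulVec v, k + r0) :=
        dimRel_trans (hwd _ _ hA) ih
      have h2 := hshift (v, k + 1)
      have h3 : DimRel B (B.transpose.mulVec (θ (v, k + 1)).1, (θ (v, k + 1)).2)
          (R0.transpose.mulVec v, k + r0) := dimRel_trans (dimRel_symm h2) h1
      have h4 := dimRel_unshift h3
      have e2 : k + r0 + 1 = (k + 1) + r0 := by omega
      rw [e2] at h4
      exact h4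
  -- intertwining up to a power of Bᵗ
  have hcomm : ∀ i : Fin n,
      DimRel B (R0.transpose.mulVec (A.transpose.mulVec (Pi.single i 1)), r0)
        (B.transpose.mulVec (R0.transpose.mulVec (Pi.single i 1)), r0) := by
    intro i
    have h1 := Pall (A.transpose.mulVec (Pi.single i 1))
    have h2 := hshift (Pi.single i 1, 0)
    have h3 := dimRel_map (Pall (Pi.single i 1))
    exact dimRel_trans (dimRel_symm h1) (dimRel_trans h2 h3)
  simp only [DimRel] at hcomm
  choose m hm1 hm2 heq using hcomm
  set s := Finset.univ.sup (fun i => m i - r0) with hsdef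
  have hkey : ∀ i : Fin n,
      (B.transpose ^ s).mulVec (R0.transpose.mulVec (A.transpose.mulVec (Pi.single i 1)))
        = (B.transpose ^ s).mulVec (B.transpose.mulVec (R0.transpose.mulVec (Pi.single i 1))) := by
    intro i
    have hsi : m i - r0 ≤ s := by
      rw [hsdef]; exact Finset.le_sup (f := fun i => m i - r0) (Finset.mem_univ i)
    have e : s = (s - (m i - r0)) + (m i - r0) := by omega
    rw [e, ← mulVec_pow_add, ← mulVec_pow_add, heq i]
  have hkey' : ∀ j : Fin n,
      (B.transpose ^ s * R0.transpose * A.transpose).mulVec (Pi.single j 1)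
        = (B.transpose ^ s * B.transpose * R0.transpose).mulVec (Pi.single j 1) := by
    intro j
    have h := hkey j
    rw [Matrix.mulVec_mulVec, Matrix.mulVec_mulVec, Matrix.mulVec_mulVec,
      Matrix.mulVec_mulVec] at h
    exact h
  have hmat : B.transpose ^ s * R0.transpose * A.transpose
      = B.transpose ^ s * B.transpose * R0.transpose := by
    ext i j
    simpa [Matrix.mulVec_single] using congrFun (hkey' j) i
  have hAR : A * (R0 * B ^ s) = (R0 * B ^ s) * B := by
    have h := congrArg Matrix.transpose hmat
    simp only [Matrix.transpose_mul, Matrix.transpose_transpose, Matrix.transpose_pow] at h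
    rw [h, ← pow_succ', Matrix.mul_assoc, ← pow_succ]
  have hRpos : ∀ i j, 0 ≤ (R0 * B ^ s) i j := by
    intro i j
    rw [Matrix.mul_apply]
    exact Finset.sum_nonneg fun k _ => mul_nonneg (hR0pos i k) (pow_entry_nonneg hBpos s k j)
  refine ⟨R0 * B ^ s, r0 + s, hRpos, hAR, ?_⟩
  intro v k
  have h1 := hmain v k
  have h2 := dimRel_shift_pow B (R0.transpose.mulVec v) (k + r0) s
  have h3 := dimRel_trans h1 (dimRel_symm h2)
  have e : (R0 * B ^ s).transpose.mulVec v
      = (B.transpose ^ s).mulVec (R0.transpose.mulVec v) := by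
    rw [Matrix.transpose_mul, Matrix.transpose_pow, Matrix.mulVec_mulVec]
  have e2 : k + (r0 + s) = k + r0 + s := by omega
  rw [e, e2]
  exact h3
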